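/- arXiv:2404.08608 — 4 statements merged into one kernel-verified Lean document; each statement's English description precedes it below -/
import Mathlib

section
/- The Klein–Beltrami distance satisfies the triangle inequality: for all points x, y, z in the open unit ball of n-dimensional Euclidean space, d_K(x,z) ≤ d_K(x,y) + d_K(y,z). -/
open RealInnerProductSpace

/-- Real inverse hyperbolic cosine, defined on `[1, ∞)`. -/
noncomputable def arcosh (x : ℝ) : ℝ := Real.log (x + Real.sqrt (x ^ 2 - 1))

/-- The argument of `arcosh` in the Klein–Beltrami distance. -/
noncomputable def kleinArg {n : ℕ} (x y : EuclideanSpace ℝ (Fin n)) : ℝ :=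
  (1 - ⟪x, y⟫) / Real.sqrt ((1 - ‖x‖ ^ 2) * (1 - ‖y‖ ^ 2))

/-- The Klein–Beltrami distance on the open unit ball. -/
noncomputable def dK {n : ℕ} (x y : EuclideanSpace ℝ (Fin n)) : ℝ := arcosh (kleinArg x y)

lemma arcosh_mono {p q : ℝ} (hp : 1 ≤ p) (hpq : p ≤ q) : arcosh p ≤ arcosh q := by
  unfold arcosh
  have h1 : (0:ℝ) < p + Real.sqrt (p ^ 2 - 1) := by positivity
  apply Real.log_le_log h1
  have := Real.sqrt_le_sqrt (show p ^ 2 - 1 ≤ q ^ 2 - 1 by nlinarith)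
  linarith

lemma arcosh_add {A B : ℝ} (hA : 1 ≤ A) (hB : 1 ≤ B) :
    arcosh A + arcosh B
      = arcosh (A * B + Real.sqrt (A ^ 2 - 1) * Real.sqrt (B ^ 2 - 1)) := by
  set a := Real.sqrt (A ^ 2 - 1) with ha
  set b := Real.sqrt (B ^ 2 - 1) with hb
  have ha0 : 0 ≤ a := Real.sqrt_nonneg _
  have hb0 : 0 ≤ b := Real.sqrt_nonneg _
  have ha2 : a ^ 2 = A ^ 2 - 1 := Real.sq_sqrt (by nlinarith)
  have hb2 : b ^ 2 = B ^ 2 - 1 := Real.sq_sqrt (by nlinarith)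
  unfold arcosh
  rw [← ha, ← hb]
  rw [← Real.log_mul (by positivity) (by positivity)]
  congr 1
  have hD : Real.sqrt ((A * B + a * b) ^ 2 - 1) = A * b + B * a := by
    rw [show (A * B + a * b) ^ 2 - 1 = (A * b + B * a) ^ 2 by
      linear_combination (b ^ 2 - B ^ 2) * ha2 - hb2]
    exact Real.sqrt_sq (by positivity)
  rw [hD]; ring

lemma one_le_kleinArg {n : ℕ} (x y : EuclideanSpace ℝ (Fin n))
    (hx : ‖x‖ < 1) (hy : ‖y‖ < 1) : 1 ≤ kleinArg x y := by
  have hx0 := norm_nonneg x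
  have hy0 := norm_nonneg y
  have hxy : ⟪x, y⟫ ≤ ‖x‖ * ‖y‖ := real_inner_le_norm x y
  have hprod : ‖x‖ * ‖y‖ < 1 := by nlinarith
  have hS0 : (0:ℝ) < Real.sqrt ((1 - ‖x‖ ^ 2) * (1 - ‖y‖ ^ 2)) := by
    exact Real.sqrt_pos.2 (mul_pos (by nlinarith) (by nlinarith))
  rw [kleinArg, le_div_iff₀ hS0, one_mul]
  calc Real.sqrt ((1 - ‖x‖ ^ 2) * (1 - ‖y‖ ^ 2))
      ≤ Real.sqrt ((1 - ‖x‖ * ‖y‖) ^ 2) := by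
        apply Real.sqrt_le_sqrt; nlinarith [sq_nonneg (‖x‖ - ‖y‖)]
    _ = 1 - ‖x‖ * ‖y‖ := Real.sqrt_sq (by linarith)
    _ ≤ 1 - ⟪x, y⟫ := by linarith

lemma cauchy_like {n : ℕ} (y u v : EuclideanSpace ℝ (Fin n)) (hy : ‖y‖ ≤ 1) :
    (⟪u, v⟫ - ⟪y, u⟫ * ⟪y, v⟫) ^ 2
      ≤ (‖u‖ ^ 2 - ⟪y, u⟫ ^ 2) * (‖v‖ ^ 2 - ⟪y, v⟫ ^ 2) := by
  have key : ∀ t : ℝ, 0 ≤ (‖v‖ ^ 2 - ⟪y, v⟫ ^ 2) * (t * t)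
      + (2 * (⟪u, v⟫ - ⟪y, u⟫ * ⟪y, v⟫)) * t + (‖u‖ ^ 2 - ⟪y, u⟫ ^ 2) := by
    intro t
    have h1 : ⟪y, u + t • v⟫ ^ 2 ≤ ‖u + t • v‖ ^ 2 := by
      have h2 : |⟪y, u + t • v⟫| ≤ ‖u + t • v‖ := by
        calc |⟪y, u + t • v⟫| ≤ ‖y‖ * ‖u + t • v‖ := abs_real_inner_le_norm _ _
        _ ≤ 1 * ‖u + t • v‖ := by gcongr
        _ = ‖u + t • v‖ := one_mul _
      calc ⟪y, u + t • v⟫ ^ 2 = |⟪y, u + t • v⟫| ^ 2 := (sq_abs _).symm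
      _ ≤ ‖u + t • v‖ ^ 2 := by gcongr
    have e1 : ‖u + t • v‖ ^ 2 = ‖u‖ ^ 2 + 2 * (t * ⟪u, v⟫) + t ^ 2 * ‖v‖ ^ 2 := by
      rw [@norm_add_sq_real, real_inner_smul_right, norm_smul]
      simp [mul_pow, sq_abs]
    have e2 : ⟪y, u + t • v⟫ = ⟪y, u⟫ + t * ⟪y, v⟫ := by
      rw [inner_add_right, real_inner_smul_right]
    rw [e1, e2] at h1
    nlinarith [h1]
  have hd := discrim_le_zero key
  rw [discrim] at hd
  nlinarith [hd]

set_option maxHeartbeats 1000000 in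
lemma klein_key {n : ℕ} (x y z : EuclideanSpace ℝ (Fin n))
    (hx : ‖x‖ < 1) (hy : ‖y‖ < 1) (hz : ‖z‖ < 1) :
    kleinArg x z ≤ kleinArg x y * kleinArg y z
      + Real.sqrt ((kleinArg x y) ^ 2 - 1) * Real.sqrt ((kleinArg y z) ^ 2 - 1) := by
  have hx0 := norm_nonneg x
  have hy0 := norm_nonneg y
  have hz0 := norm_nonneg z
  obtain ⟨sx, hsx_def⟩ : ∃ s : ℝ, s = Real.sqrt (1 - ‖x‖ ^ 2) := ⟨_, rfl⟩
  obtain ⟨sy, hsy_def⟩ : ∃ s : ℝ, s = Real.sqrt (1 - ‖y‖ ^ 2) := ⟨_, rfl⟩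
  obtain ⟨sz, hsz_def⟩ : ∃ s : ℝ, s = Real.sqrt (1 - ‖z‖ ^ 2) := ⟨_, rfl⟩
  have hsx0 : 0 < sx := hsx_def ▸ Real.sqrt_pos.2 (by nlinarith)
  have hsy0 : 0 < sy := hsy_def ▸ Real.sqrt_pos.2 (by nlinarith)
  have hsz0 : 0 < sz := hsz_def ▸ Real.sqrt_pos.2 (by nlinarith)
  have hsx2 : sx ^ 2 = 1 - ‖x‖ ^ 2 := hsx_def ▸ Real.sq_sqrt (by nlinarith)
  have hsy2 : sy ^ 2 = 1 - ‖y‖ ^ 2 := hsy_def ▸ Real.sq_sqrt (by nlinarith)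
  have hsz2 : sz ^ 2 = 1 - ‖z‖ ^ 2 := hsz_def ▸ Real.sq_sqrt (by nlinarith)
  have hpx : ‖x‖ ^ 2 = 1 - sx ^ 2 := by linarith
  have hpy : ‖y‖ ^ 2 = 1 - sy ^ 2 := by linarith
  have hpz : ‖z‖ ^ 2 = 1 - sz ^ 2 := by linarith
  have hkA : kleinArg x y = (1 - ⟪x, y⟫) / (sx * sy) := by
    rw [kleinArg, Real.sqrt_mul (by nlinarith : (0:ℝ) ≤ 1 - ‖x‖ ^ 2), ← hsx_def, ← hsy_def]
  have hkB : kleinArg y z = (1 - ⟪y, z⟫) / (sy * sz) := by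
    rw [kleinArg, Real.sqrt_mul (by nlinarith : (0:ℝ) ≤ 1 - ‖y‖ ^ 2), ← hsy_def, ← hsz_def]
  have hkC : kleinArg x z = (1 - ⟪x, z⟫) / (sx * sz) := by
    rw [kleinArg, Real.sqrt_mul (by nlinarith : (0:ℝ) ≤ 1 - ‖x‖ ^ 2), ← hsx_def, ← hsz_def]
  obtain ⟨A, hA⟩ : ∃ A : ℝ, A = (1 - ⟪x, y⟫) / (sx * sy) := ⟨_, rfl⟩
  obtain ⟨B, hB⟩ : ∃ B : ℝ, B = (1 - ⟪y, z⟫) / (sy * sz) := ⟨_, rfl⟩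
  obtain ⟨C, hC⟩ : ∃ C : ℝ, C = (1 - ⟪x, z⟫) / (sx * sz) := ⟨_, rfl⟩
  have h1A : 1 ≤ A := by rw [hA, ← hkA]; exact one_le_kleinArg x y hx hy
  have h1B : 1 ≤ B := by rw [hB, ← hkB]; exact one_le_kleinArg y z hy hz
  rw [hkA, hkB, hkC, ← hA, ← hB, ← hC]
  set u : EuclideanSpace ℝ (Fin n) := sx⁻¹ • x - (A * sy⁻¹) • y with hu
  set v : EuclideanSpace ℝ (Fin n) := sz⁻¹ • z - (B * sy⁻¹) • y with hv
  have hyu : ⟪y, u⟫ = sx⁻¹ * ⟪x, y⟫ - A * sy⁻¹ * ‖y‖ ^ 2 := by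
    simp only [hu, inner_sub_right, real_inner_smul_right, real_inner_comm y x,
      real_inner_self_eq_norm_sq]
  have hyv : ⟪y, v⟫ = sz⁻¹ * ⟪y, z⟫ - B * sy⁻¹ * ‖y‖ ^ 2 := by
    simp only [hv, inner_sub_right, real_inner_smul_right, real_inner_comm y z,
      real_inner_self_eq_norm_sq]
  have huu : ⟪u, u⟫ = sx⁻¹ * sx⁻¹ * ‖x‖ ^ 2 - 2 * (sx⁻¹ * (A * sy⁻¹)) * ⟪x, y⟫
      + (A * sy⁻¹) * (A * sy⁻¹) * ‖y‖ ^ 2 := by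
    simp only [hu, inner_sub_left, inner_sub_right, real_inner_smul_left,
      real_inner_smul_right, real_inner_comm y x]
    simp only [real_inner_self_eq_norm_sq]
    ring
  have hvv : ⟪v, v⟫ = sz⁻¹ * sz⁻¹ * ‖z‖ ^ 2 - 2 * (sz⁻¹ * (B * sy⁻¹)) * ⟪y, z⟫
      + (B * sy⁻¹) * (B * sy⁻¹) * ‖y‖ ^ 2 := by
    simp only [hv, inner_sub_left, inner_sub_right, real_inner_smul_left,
      real_inner_smul_right, real_inner_comm y z]
    simp only [real_inner_self_eq_norm_sq]
    ring
  have huv : ⟪u, v⟫ = sx⁻¹ * sz⁻¹ * ⟪x, z⟫ - sx⁻¹ * (B * sy⁻¹) * ⟪x, y⟫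
      - (A * sy⁻¹) * sz⁻¹ * ⟪y, z⟫ + (A * sy⁻¹) * (B * sy⁻¹) * ‖y‖ ^ 2 := by
    simp only [hu, hv, inner_sub_left, inner_sub_right, real_inner_smul_left,
      real_inner_smul_right, real_inner_comm y x, real_inner_comm z x,
      real_inner_comm z y]
    simp only [real_inner_self_eq_norm_sq]
    ring
  have h1 : ‖u‖ ^ 2 - ⟪y, u⟫ ^ 2 = A ^ 2 - 1 := by
    rw [← real_inner_self_eq_norm_sq, huu, hyu, hpx, hpy, hA]
    field_simp
    ring
  have h2 : ‖v‖ ^ 2 - ⟪y, v⟫ ^ 2 = B ^ 2 - 1 := by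
    rw [← real_inner_self_eq_norm_sq, hvv, hyv, hpy, hpz, hB]
    field_simp
    ring
  have h3 : ⟪u, v⟫ - ⟪y, u⟫ * ⟪y, v⟫ = A * B - C := by
    rw [huv, hyu, hyv, hpy, hA, hB, hC]
    field_simp
    ring
  have hcs := cauchy_like y u v hy.le
  rw [h1, h2, h3] at hcs
  have habs : |A * B - C| ≤ Real.sqrt ((A ^ 2 - 1) * (B ^ 2 - 1)) := by
    rw [← Real.sqrt_sq_eq_abs]
    exact Real.sqrt_le_sqrt hcs
  have hA2 : (0:ℝ) ≤ A ^ 2 - 1 := by nlinarith only [h1A, sq_nonneg (A - 1)]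
  rw [Real.sqrt_mul hA2] at habs
  have hna := neg_abs_le (A * B - C)
  linarith only [habs, hna]


theorem dK_triangle {n : ℕ} (x y z : EuclideanSpace ℝ (Fin n))
    (hx : ‖x‖ < 1) (hy : ‖y‖ < 1) (hz : ‖z‖ < 1) :
    dK x z ≤ dK x y + dK y z := by
  have h1A := one_le_kleinArg x y hx hy
  have h1B := one_le_kleinArg y z hy hz
  have h1C := one_le_kleinArg x z hx hz
  rw [dK, dK, dK, arcosh_add h1A h1B]
  exact arcosh_mono h1C (klein_key x y z hx hy hz)
end

section
/- In the Klein–Beltrami model, Euclidean straight-line segments are geodesic: for all points x and y in the open unit ball of ℝⁿ and every t ∈ [0,1], setting z = (1 − t)·x + t·y, one has d_K(x,z) + d_K(z,y) = d_K(x,y). -/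
open RealInnerProductSpace

lemma D_nonneg {n : ℕ} (x y : EuclideanSpace ℝ (Fin n)) (hx : ‖x‖ < 1) (hy : ‖y‖ < 1) :
    0 ≤ (1 - ⟪x, y⟫) ^ 2 - (1 - ‖x‖ ^ 2) * (1 - ‖y‖ ^ 2) := by
  have h1 : ⟪x, y⟫ ≤ ‖x‖ * ‖y‖ := real_inner_le_norm x y
  have h2 : ‖x‖ * ‖y‖ ≤ 1 := by nlinarith [norm_nonneg x, norm_nonneg y]
  nlinarith [sq_nonneg (‖x‖ - ‖y‖), mul_nonneg (sub_nonneg.2 h1) (by linarith : (0:ℝ) ≤ 2 - ⟪x, y⟫ - ‖x‖ * ‖y‖)]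

lemma dK_eq {n : ℕ} (x y : EuclideanSpace ℝ (Fin n)) (hx : ‖x‖ < 1) (hy : ‖y‖ < 1) :
    dK x y = Real.log ((1 - ⟪x, y⟫ +
      Real.sqrt ((1 - ⟪x, y⟫) ^ 2 - (1 - ‖x‖ ^ 2) * (1 - ‖y‖ ^ 2))) /
      Real.sqrt ((1 - ‖x‖ ^ 2) * (1 - ‖y‖ ^ 2))) := by
  have hq0 : 0 < 1 - ‖x‖ ^ 2 := by nlinarith [norm_nonneg x]
  have hq1 : 0 < 1 - ‖y‖ ^ 2 := by nlinarith [norm_nonneg y]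
  have hqp : 0 < (1 - ‖x‖ ^ 2) * (1 - ‖y‖ ^ 2) := mul_pos hq0 hq1
  have hs : 0 < Real.sqrt ((1 - ‖x‖ ^ 2) * (1 - ‖y‖ ^ 2)) := Real.sqrt_pos.mpr hqp
  unfold dK arcosh kleinArg
  congr 1
  rw [div_pow, Real.sq_sqrt hqp.le]
  rw [show (1 - ⟪x, y⟫) ^ 2 / ((1 - ‖x‖ ^ 2) * (1 - ‖y‖ ^ 2)) - 1
      = ((1 - ⟪x, y⟫) ^ 2 - (1 - ‖x‖ ^ 2) * (1 - ‖y‖ ^ 2)) / ((1 - ‖x‖ ^ 2) * (1 - ‖y‖ ^ 2))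
      from by field_simp]
  rw [Real.sqrt_div (D_nonneg x y hx hy), ← add_div]

set_option maxHeartbeats 1600000 in
theorem dK_segment_geodesic {n : ℕ} (x y : EuclideanSpace ℝ (Fin n))
    (hx : ‖x‖ < 1) (hy : ‖y‖ < 1) (t : ℝ) (ht : t ∈ Set.Icc (0 : ℝ) 1) :
    dK x ((1 - t) • x + t • y) + dK ((1 - t) • x + t • y) y = dK x y := by
  obtain ⟨ht0, ht1⟩ := ht
  set z : EuclideanSpace ℝ (Fin n) := (1 - t) • x + t • y with hzdef
  have hz : ‖z‖ < 1 := by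
    have h1 : ‖z‖ ≤ (1 - t) * ‖x‖ + t * ‖y‖ := by
      calc ‖z‖ ≤ ‖(1 - t) • x‖ + ‖t • y‖ := norm_add_le _ _
        _ = (1 - t) * ‖x‖ + t * ‖y‖ := by
            rw [norm_smul, norm_smul, Real.norm_of_nonneg (by linarith), Real.norm_of_nonneg ht0]
    nlinarith [mul_le_mul_of_nonneg_left hx.le (by linarith : (0:ℝ) ≤ 1 - t),
      mul_le_mul_of_nonneg_left hy.le ht0]
  have hxz : ⟪x, z⟫ = (1 - t) * ‖x‖ ^ 2 + t * ⟪x, y⟫ := by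
    simp only [hzdef, inner_add_right, real_inner_smul_right, real_inner_self_eq_norm_sq]
  have hzy : ⟪z, y⟫ = (1 - t) * ⟪x, y⟫ + t * ‖y‖ ^ 2 := by
    simp only [hzdef, inner_add_left, real_inner_smul_left, real_inner_self_eq_norm_sq]
  have hz2 : ‖z‖ ^ 2 = (1 - t) ^ 2 * ‖x‖ ^ 2 + 2 * (t * (1 - t)) * ⟪x, y⟫ + t ^ 2 * ‖y‖ ^ 2 := by
    rw [hzdef, norm_add_sq_real, norm_smul, norm_smul, real_inner_smul_left,
      real_inner_smul_right, mul_pow, mul_pow, Real.norm_eq_abs, Real.norm_eq_abs,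
      sq_abs, sq_abs]
    ring
  rw [dK_eq x z hx hz, dK_eq z y hz hy, dK_eq x y hx hy, hxz, hzy, hz2]
  set b : ℝ := ⟪x, y⟫ with hbdef
  have hq0 : 0 < 1 - ‖x‖ ^ 2 := by nlinarith [norm_nonneg x]
  have hq1 : 0 < 1 - ‖y‖ ^ 2 := by nlinarith [norm_nonneg y]
  have hqs : 0 < 1 - ((1 - t) ^ 2 * ‖x‖ ^ 2 + 2 * (t * (1 - t)) * b + t ^ 2 * ‖y‖ ^ 2) := by
    rw [← hz2]; nlinarith [norm_nonneg z]
  have hN : b < 1 := lt_of_le_of_lt (real_inner_le_norm x y)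
    (by nlinarith [norm_nonneg x, norm_nonneg y])
  have hD : 0 ≤ (1 - b) ^ 2 - (1 - ‖x‖ ^ 2) * (1 - ‖y‖ ^ 2) := D_nonneg x y hx hy
  rw [show (1 - ((1 - t) * ‖x‖ ^ 2 + t * b)) ^ 2 -
      (1 - ‖x‖ ^ 2) * (1 - ((1 - t) ^ 2 * ‖x‖ ^ 2 + 2 * (t * (1 - t)) * b + t ^ 2 * ‖y‖ ^ 2))
      = t ^ 2 * ((1 - b) ^ 2 - (1 - ‖x‖ ^ 2) * (1 - ‖y‖ ^ 2)) from by ring,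
    Real.sqrt_mul (sq_nonneg t), Real.sqrt_sq ht0]
  rw [show (1 - ((1 - t) * b + t * ‖y‖ ^ 2)) ^ 2 -
      (1 - ((1 - t) ^ 2 * ‖x‖ ^ 2 + 2 * (t * (1 - t)) * b + t ^ 2 * ‖y‖ ^ 2)) * (1 - ‖y‖ ^ 2)
      = (1 - t) ^ 2 * ((1 - b) ^ 2 - (1 - ‖x‖ ^ 2) * (1 - ‖y‖ ^ 2)) from by ring,
    Real.sqrt_mul (sq_nonneg (1 - t)), Real.sqrt_sq (by linarith : (0:ℝ) ≤ 1 - t)]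
  rw [Real.sqrt_mul hq0.le (1 - ((1 - t) ^ 2 * ‖x‖ ^ 2 + 2 * (t * (1 - t)) * b + t ^ 2 * ‖y‖ ^ 2)),
    Real.sqrt_mul hqs.le (1 - ‖y‖ ^ 2), Real.sqrt_mul hq0.le (1 - ‖y‖ ^ 2)]
  set s0 : ℝ := Real.sqrt (1 - ‖x‖ ^ 2) with hs0def
  set s1 : ℝ := Real.sqrt (1 - ‖y‖ ^ 2) with hs1def
  set ss : ℝ := Real.sqrt (1 - ((1 - t) ^ 2 * ‖x‖ ^ 2 + 2 * (t * (1 - t)) * b + t ^ 2 * ‖y‖ ^ 2))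
    with hssdef
  set sd : ℝ := Real.sqrt ((1 - b) ^ 2 - (1 - ‖x‖ ^ 2) * (1 - ‖y‖ ^ 2)) with hsddef
  have hs0 : 0 < s0 := Real.sqrt_pos.2 hq0
  have hs1 : 0 < s1 := Real.sqrt_pos.2 hq1
  have hss : 0 < ss := Real.sqrt_pos.2 hqs
  have hsd : 0 ≤ sd := Real.sqrt_nonneg _
  have hss2 : ss ^ 2 = 1 - ((1 - t) ^ 2 * ‖x‖ ^ 2 + 2 * (t * (1 - t)) * b + t ^ 2 * ‖y‖ ^ 2) :=
    Real.sq_sqrt hqs.le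
  have hsd2 : sd ^ 2 = (1 - b) ^ 2 - (1 - ‖x‖ ^ 2) * (1 - ‖y‖ ^ 2) := Real.sq_sqrt hD
  have hP : 0 < 1 - ((1 - t) * ‖x‖ ^ 2 + t * b) := by
    rcases eq_or_lt_of_le ht0 with h | h
    · rw [← h]; ring_nf; linarith
    · nlinarith [mul_nonneg (by linarith : (0:ℝ) ≤ 1 - t) hq0.le,
        mul_pos h (by linarith : (0:ℝ) < 1 - b)]
  have hQ : 0 < 1 - ((1 - t) * b + t * ‖y‖ ^ 2) := by
    rcases eq_or_lt_of_le ht1 with h | h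
    · rw [h]; ring_nf; linarith
    · nlinarith [mul_nonneg ht0 hq1.le,
        mul_pos (by linarith : (0:ℝ) < 1 - t) (by linarith : (0:ℝ) < 1 - b)]
  have hA : 0 < (1 - ((1 - t) * ‖x‖ ^ 2 + t * b) + t * sd) / (s0 * ss) :=
    div_pos (by nlinarith [mul_nonneg ht0 hsd]) (mul_pos hs0 hss)
  have hB : 0 < (1 - ((1 - t) * b + t * ‖y‖ ^ 2) + (1 - t) * sd) / (ss * s1) :=
    div_pos (by nlinarith [mul_nonneg (by linarith : (0:ℝ) ≤ 1 - t) hsd]) (mul_pos hss hs1)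
  rw [← Real.log_mul hA.ne' hB.ne']
  congr 1
  rw [div_mul_div_comm, div_eq_div_iff (by positivity) (by positivity)]
  linear_combination (s0 * s1 * t * (1 - t)) * hsd2 - (s0 * s1 * (1 - b + sd)) * hss2
end

section
/- (Pointwise form of the hyperbolic-Voronoi-to-power-diagram correspondence.) Let x, p, q be points in the open unit ball of ℝⁿ, and let s_p = p/(2√(1 − ‖p‖²)), w_p = ‖p‖²/(4(1 − ‖p‖²)) − 1/√(1 − ‖p‖²), and similarly for q. Then d_K(x,p) ≤ d_K(x,q) if and only if ‖x − s_p‖² − w_p ≤ ‖x − s_q‖² − w_q. -/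
open RealInnerProductSpace

/-- Lifted center `s_p = p / (2 √(1 - ‖p‖²))`. -/
noncomputable def liftedCenter {n : ℕ} (p : EuclideanSpace ℝ (Fin n)) :
    EuclideanSpace ℝ (Fin n) :=
  (1 / (2 * Real.sqrt (1 - ‖p‖ ^ 2))) • p

/-- Lifted weight `w_p = ‖p‖² / (4 (1 - ‖p‖²)) - 1 / √(1 - ‖p‖²)`. -/
noncomputable def liftedWeight {n : ℕ} (p : EuclideanSpace ℝ (Fin n)) : ℝ :=
  ‖p‖ ^ 2 / (4 * (1 - ‖p‖ ^ 2)) - 1 / Real.sqrt (1 - ‖p‖ ^ 2)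

/-- Euclidean power distance of `x` to a center `s` with weight `w`. -/
noncomputable def powerDist {n : ℕ} (x s : EuclideanSpace ℝ (Fin n)) (w : ℝ) : ℝ :=
  ‖x - s‖ ^ 2 - w


lemma arcosh_le_arcosh_iff {a b : ℝ} (ha : 1 ≤ a) (hb : 1 ≤ b) :
    arcosh a ≤ arcosh b ↔ a ≤ b := by
  unfold arcosh
  have ha' : (0:ℝ) < a + Real.sqrt (a ^ 2 - 1) := by
    have := Real.sqrt_nonneg (a ^ 2 - 1); linarith
  have hb' : (0:ℝ) < b + Real.sqrt (b ^ 2 - 1) := by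
    have := Real.sqrt_nonneg (b ^ 2 - 1); linarith
  rw [Real.log_le_log_iff ha' hb']
  constructor
  · intro h
    by_contra hab
    push_neg at hab
    have h1 : Real.sqrt (b ^ 2 - 1) ≤ Real.sqrt (a ^ 2 - 1) :=
      Real.sqrt_le_sqrt (by nlinarith)
    linarith
  · intro h
    have h1 : Real.sqrt (a ^ 2 - 1) ≤ Real.sqrt (b ^ 2 - 1) :=
      Real.sqrt_le_sqrt (by nlinarith)
    linarith

lemma powerDist_eq_kleinArg {n : ℕ} (x p : EuclideanSpace ℝ (Fin n))
    (hx : ‖x‖ < 1) (hp : ‖p‖ < 1) :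
    powerDist x (liftedCenter p) (liftedWeight p)
      = ‖x‖ ^ 2 + Real.sqrt (1 - ‖x‖ ^ 2) * kleinArg x p := by
  have hx0 := norm_nonneg x
  have hp0 := norm_nonneg p
  have hA : 0 < Real.sqrt (1 - ‖x‖ ^ 2) := Real.sqrt_pos.2 (by nlinarith)
  have hB : 0 < Real.sqrt (1 - ‖p‖ ^ 2) := Real.sqrt_pos.2 (by nlinarith)
  have hB2 : Real.sqrt (1 - ‖p‖ ^ 2) ^ 2 = 1 - ‖p‖ ^ 2 := Real.sq_sqrt (by nlinarith)
  rw [powerDist, liftedCenter, liftedWeight, kleinArg,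
    Real.sqrt_mul (show (0:ℝ) ≤ 1 - ‖x‖ ^ 2 by nlinarith)]
  rw [norm_sub_sq_real, real_inner_smul_right, norm_smul, Real.norm_eq_abs,
    abs_of_pos (show (0:ℝ) < 1 / (2 * Real.sqrt (1 - ‖p‖ ^ 2)) by positivity)]
  set A := Real.sqrt (1 - ‖x‖ ^ 2) with hAdef
  set B := Real.sqrt (1 - ‖p‖ ^ 2) with hBdef
  rw [show (1:ℝ) - ‖p‖ ^ 2 = B ^ 2 from hB2.symm]
  field_simp
  ring

theorem dK_le_iff_powerDist_le {n : ℕ} (x p q : EuclideanSpace ℝ (Fin n))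
    (hx : ‖x‖ < 1) (hp : ‖p‖ < 1) (hq : ‖q‖ < 1) :
    dK x p ≤ dK x q ↔
      powerDist x (liftedCenter p) (liftedWeight p)
        ≤ powerDist x (liftedCenter q) (liftedWeight q) := by
  have hA : 0 < Real.sqrt (1 - ‖x‖ ^ 2) :=
    Real.sqrt_pos.2 (by nlinarith [norm_nonneg x])
  rw [dK, dK, arcosh_le_arcosh_iff (one_le_kleinArg x p hx hp) (one_le_kleinArg x q hx hq),
    powerDist_eq_kleinArg x p hx hp, powerDist_eq_kleinArg x q hx hq,
    add_le_add_iff_left, mul_le_mul_iff_right₀ hA]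
end

section
/- The central projection from the Lorentz hyperboloid to the Klein–Beltrami ball is an isometry: for all z, z' ∈ 𝕃ⁿ, writing x = (z₁/z₀, …, zₙ/z₀) and y = (z₁'/z₀', …, zₙ'/z₀'), one has (1 − ⟨x,y⟩)/√((1 − ‖x‖²)(1 − ‖y‖²)) = −⟨z,z'⟩_𝓛, and hence d_K(x,y) = arccosh(−⟨z,z'⟩_𝓛) = d_𝕃(z,z'). -/
open RealInnerProductSpace

/-- The Minkowski (Lorentzian) bilinear form on `ℝ^{n+1}`. -/
noncomputable def lorentzInner {n : ℕ} (z z' : Fin (n + 1) → ℝ) : ℝ :=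
  -(z 0 * z' 0) + ∑ i : Fin n, z i.succ * z' i.succ

/-- Membership in the Lorentz hyperboloid model `𝕃ⁿ`. -/
def onHyperboloid {n : ℕ} (z : Fin (n + 1) → ℝ) : Prop :=
  lorentzInner z z = -1 ∧ 0 < z 0

/-- The Lorentz distance on the hyperboloid. -/
noncomputable def dL {n : ℕ} (z z' : Fin (n + 1) → ℝ) : ℝ := arcosh (-lorentzInner z z')

/-- Central projection from the hyperboloid to the Klein–Beltrami ball. -/
noncomputable def lorentzToKlein {n : ℕ} (z : Fin (n + 1) → ℝ) :
    EuclideanSpace ℝ (Fin n) :=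
  WithLp.toLp 2 (fun i => z i.succ / z 0)

lemma lorentzToKlein_inner {n : ℕ} (z z' : Fin (n + 1) → ℝ)
    (h0 : z 0 ≠ 0) (h0' : z' 0 ≠ 0) :
    ⟪lorentzToKlein z, lorentzToKlein z'⟫ =
      (∑ i : Fin n, z i.succ * z' i.succ) / (z 0 * z' 0) := by
  simp only [PiLp.inner_apply, RCLike.inner_apply, conj_trivial, lorentzToKlein, PiLp.toLp_apply]
  rw [Finset.sum_div]
  congr 1; ext i; field_simp

theorem lorentzToKlein_isometry {n : ℕ} (z z' : Fin (n + 1) → ℝ)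
    (hz : onHyperboloid z) (hz' : onHyperboloid z') :
    kleinArg (lorentzToKlein z) (lorentzToKlein z') = -lorentzInner z z' ∧
      dK (lorentzToKlein z) (lorentzToKlein z') = arcosh (-lorentzInner z z') ∧
      dK (lorentzToKlein z) (lorentzToKlein z') = dL z z' := by
  obtain ⟨hz1, hz0⟩ := hz
  obtain ⟨hz1', hz0'⟩ := hz'
  have h0 : z 0 ≠ 0 := ne_of_gt hz0
  have h0' : z' 0 ≠ 0 := ne_of_gt hz0'
  have hsum : ∑ i : Fin n, z i.succ * z i.succ = z 0 * z 0 - 1 := by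
    have := hz1; unfold lorentzInner at this; linarith
  have hsum' : ∑ i : Fin n, z' i.succ * z' i.succ = z' 0 * z' 0 - 1 := by
    have := hz1'; unfold lorentzInner at this; linarith
  have hnorm : 1 - ‖lorentzToKlein z‖ ^ 2 = 1 / (z 0 * z 0) := by
    rw [← real_inner_self_eq_norm_sq, lorentzToKlein_inner z z h0 h0, hsum]
    field_simp
    ring
  have hnorm' : 1 - ‖lorentzToKlein z'‖ ^ 2 = 1 / (z' 0 * z' 0) := by
    rw [← real_inner_self_eq_norm_sq, lorentzToKlein_inner z' z' h0' h0', hsum']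
    field_simp
    ring
  have hsqrt : Real.sqrt ((1 - ‖lorentzToKlein z‖ ^ 2) * (1 - ‖lorentzToKlein z'‖ ^ 2))
      = 1 / (z 0 * z' 0) := by
    rw [hnorm, hnorm']
    rw [show 1 / (z 0 * z 0) * (1 / (z' 0 * z' 0)) = (1 / (z 0 * z' 0)) ^ 2 by ring]
    exact Real.sqrt_sq (by positivity)
  have hkey : kleinArg (lorentzToKlein z) (lorentzToKlein z') = -lorentzInner z z' := by
    unfold kleinArg
    rw [hsqrt, lorentzToKlein_inner z z' h0 h0']
    unfold lorentzInner
    field_simp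
    ring
  exact ⟨hkey, by unfold dK; rw [hkey], by unfold dK dL; rw [hkey]⟩
end
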